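/- For a Q-metric space (X,d) with Q continuous and A ⊆ X, the closure of A in the open ball topology τ_d equals {y ∈ X : ∀δ ≪ 1, ∃x ∈ A, δ ≪ d(y,x)}. -/

import Mathlib

/-- `a` is way-below `b`: for every nonempty directed `D` with `b ≤ sSup D`,
some element of `D` dominates `a`. -/
def WayBelow {Q : Type*} [CompleteLattice Q] (a b : Q) : Prop :=
  ∀ D : Set Q, D.Nonempty → DirectedOn (· ≤ ·) D → b ≤ sSup D → ∃ d ∈ D, a ≤ d

/-- A complete lattice is continuous if every element is the join of the
elements way-below it. -/
def ContinuousLattice (Q : Type*) [CompleteLattice Q] : Prop :=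
  ∀ x : Q, x = sSup {y | WayBelow y x}

/-- Open ball in a `Q`-metric space. -/
def ball {Q X : Type*} [CompleteLattice Q] (d : X → X → Q) (x : X) (δ : Q) : Set X :=
  {y | WayBelow δ (d x y)}

section Aux

variable {Q : Type*} [CompleteLattice Q]

lemma wb_bot (b : Q) : WayBelow ⊥ b := fun _ hD _ _ => hD.imp fun d hd => ⟨hd, bot_le⟩

lemma wb_mono_left {a' a b : Q} (h : a' ≤ a) (hab : WayBelow a b) : WayBelow a' b :=
  fun D h1 h2 h3 => (hab D h1 h2 h3).imp fun d hd => ⟨hd.1, h.trans hd.2⟩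

lemma wb_mono_right {a b b' : Q} (hab : WayBelow a b) (h : b ≤ b') : WayBelow a b' :=
  fun D h1 h2 h3 => hab D h1 h2 (h.trans h3)

lemma wb_le {a b : Q} (h : WayBelow a b) : a ≤ b := by
  obtain ⟨d, hd, had⟩ := h {b} ⟨b, rfl⟩ (directedOn_singleton _)
    (by simp)
  simpa [Set.mem_singleton_iff.mp hd] using had

lemma wb_sup {a b c : Q} (h1 : WayBelow a c) (h2 : WayBelow b c) : WayBelow (a ⊔ b) c := by
  intro D hD hdir hle
  obtain ⟨d1, hd1, h1⟩ := h1 D hD hdir hle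
  obtain ⟨d2, hd2, h2⟩ := h2 D hD hdir hle
  obtain ⟨e, he, he1, he2⟩ := hdir d1 hd1 d2 hd2
  exact ⟨e, he, sup_le (h1.trans he1) (h2.trans he2)⟩

lemma wb_set_directed (c : Q) : DirectedOn (· ≤ ·) {y : Q | WayBelow y c} :=
  fun a ha b hb => ⟨a ⊔ b, wb_sup ha hb, le_sup_left, le_sup_right⟩

/-- Interpolation in a continuous lattice. -/
lemma wb_interp (hcont : ContinuousLattice Q) {a b : Q} (h : WayBelow a b) :
    ∃ c, WayBelow a c ∧ WayBelow c b := by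
  set D : Set Q := {u | ∃ v, WayBelow u v ∧ WayBelow v b} with hD
  have hne : D.Nonempty := ⟨⊥, ⊥, wb_bot _, wb_bot _⟩
  have hdir : DirectedOn (· ≤ ·) D := by
    rintro u1 ⟨v1, hu1, hv1⟩ u2 ⟨v2, hu2, hv2⟩
    refine ⟨u1 ⊔ u2, ⟨v1 ⊔ v2, wb_sup (wb_mono_right hu1 le_sup_left)
      (wb_mono_right hu2 le_sup_right), wb_sup hv1 hv2⟩, le_sup_left, le_sup_right⟩
  have hle : b ≤ sSup D := by
    conv_lhs => rw [hcont b]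
    refine sSup_le fun v hv => ?_
    conv_lhs => rw [hcont v]
    exact sSup_le fun u hu => le_sSup ⟨v, hu, hv⟩
  obtain ⟨u, ⟨v, huv, hvb⟩, hau⟩ := h D hne hdir hle
  exact ⟨v, wb_mono_left hau huv, hvb⟩

end Aux

section Key

variable {Q : Type*} [CompleteLattice Q] [Monoid Q] [IsQuantale Q]

lemma key_eps (hcont : ContinuousLattice Q) {δ c : Q} (h : WayBelow δ c) :
    ∃ ε : Q, WayBelow ε 1 ∧ δ ≤ c * ε := by
  set S : Set Q := (c * ·) '' {ε : Q | WayBelow ε 1} with hS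
  have hne : S.Nonempty := ⟨c * ⊥, ⊥, wb_bot _, rfl⟩
  have hdir : DirectedOn (· ≤ ·) S := by
    rintro _ ⟨e1, he1, rfl⟩ _ ⟨e2, he2, rfl⟩
    exact ⟨c * (e1 ⊔ e2), ⟨e1 ⊔ e2, wb_sup he1 he2, rfl⟩,
      mul_le_mul_right le_sup_left c, mul_le_mul_right le_sup_right c⟩
  have hle : c ≤ sSup S := by
    have h1 : (1 : Q) ≤ sSup {ε : Q | WayBelow ε 1} := le_of_eq (hcont 1)
    calc c = c * 1 := (mul_one c).symm
      _ ≤ c * sSup {ε : Q | WayBelow ε 1} := mul_le_mul_right h1 c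
      _ = sSup S := by rw [mul_sSup_distrib, hS, sSup_image]
  obtain ⟨_, ⟨ε, hε, rfl⟩, hd⟩ := h S hne hdir hle
  exact ⟨ε, hε, hd⟩

end Key

theorem closure_eq {Q X : Type*} [CompleteLattice Q] [Monoid Q] [IsQuantale Q]
    (hcont : ContinuousLattice Q) (d : X → X → Q)
    (hrefl : ∀ x : X, 1 ≤ d x x) (htri : ∀ x y z : X, d x y * d y z ≤ d x z)
    (A : Set X) :
    @closure X (TopologicalSpace.generateFrom
        {s | ∃ (x : X) (δ : Q), WayBelow δ 1 ∧ s = ball d x δ}) A =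
      {y : X | ∀ δ : Q, WayBelow δ 1 → ∃ x ∈ A, WayBelow δ (d y x)} := by
  letI τ : TopologicalSpace X := TopologicalSpace.generateFrom
    {s | ∃ (x : X) (δ : Q), WayBelow δ 1 ∧ s = ball d x δ}
  -- key: every open set containing y contains a ball around y
  have hball : ∀ U : Set X, IsOpen U → ∀ y ∈ U,
      ∃ ε : Q, WayBelow ε 1 ∧ ball d y ε ⊆ U := by
    intro U hU
    induction hU with
    | basic s hs =>
      obtain ⟨x, δ, hδ, rfl⟩ := hs
      intro y hy
      obtain ⟨δ', hδδ', hδ'⟩ := wb_interp hcont hy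
      obtain ⟨ε, hε1, hεle⟩ := key_eps hcont hδ'
      refine ⟨ε, hε1, fun z hz => ?_⟩
      have : δ' ≤ d x z :=
        hεle.trans <| (mul_le_mul_right (wb_le hz) _).trans (htri x y z)
      exact wb_mono_right hδδ' this
    | univ => exact fun y _ => ⟨⊥, wb_bot _, Set.subset_univ _⟩
    | inter s t _ _ ihs iht =>
      intro y hy
      obtain ⟨ε1, hε1, h1⟩ := ihs y hy.1
      obtain ⟨ε2, hε2, h2⟩ := iht y hy.2
      refine ⟨ε1 ⊔ ε2, wb_sup hε1 hε2, fun z hz => ?_⟩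
      exact ⟨h1 (wb_mono_left le_sup_left hz), h2 (wb_mono_left le_sup_right hz)⟩
    | sUnion S _ ih =>
      intro y hy
      obtain ⟨s, hs, hys⟩ := hy
      obtain ⟨ε, hε, h⟩ := ih s hs y hys
      exact ⟨ε, hε, h.trans (Set.subset_sUnion_of_mem hs)⟩
  ext y
  rw [mem_closure_iff]
  constructor
  · intro h δ hδ
    have hopen : IsOpen (ball d y δ) :=
      TopologicalSpace.isOpen_generateFrom_of_mem ⟨y, δ, hδ, rfl⟩
    have hyy : y ∈ ball d y δ := wb_mono_right hδ (hrefl y)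
    obtain ⟨x, hx1, hx2⟩ := h _ hopen hyy
    exact ⟨x, hx2, hx1⟩
  · intro h U hU hyU
    obtain ⟨ε, hε, hsub⟩ := hball U hU y hyU
    obtain ⟨x, hxA, hx⟩ := h ε hε
    exact ⟨x, hsub hx, hxA⟩
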